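/- Fix σ ∈ [0,1). (i) For every ε > 0 there exists a unique real t ∈ [1, ∞) such that (t^(σ−1) + 1)/(t + 1)^(σ−1) = 2^(2−σ)·(1+ε), and this solution satisfies t > 1. (ii) If moreover σ ∈ (0,1), then for every ε ∈ (0, 1 − 2^(σ−1)) there exists a unique real t ∈ [1, ∞) such that (t^σ + 1)/(t + 1)^σ = 2^(1−σ)·(1−ε), and this solution satisfies t > 1. -/

import Mathlib

open Set Filter

lemma aux_deriv (a t : ℝ) (ht : 0 < t) :
    HasDerivAt (fun s : ℝ => (s ^ a + 1) / (s + 1) ^ a)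
      ((a * (t + 1) ^ (a - 1) * (t ^ (a - 1) - 1)) / ((t + 1) ^ a) ^ 2) t := by
  have ht1 : (0:ℝ) < t + 1 := by linarith
  have h1 : HasDerivAt (fun s : ℝ => s ^ a + 1) (a * t ^ (a - 1)) t :=
    (Real.hasDerivAt_rpow_const (Or.inl ht.ne')).add_const 1
  have h2 : HasDerivAt (fun s : ℝ => (s + 1) ^ a) (a * (t + 1) ^ (a - 1) * 1) t :=
    (Real.hasDerivAt_rpow_const (x := t + 1) (p := a) (Or.inl ht1.ne')).comp (h₂ := fun x : ℝ => x ^ a) t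
      ((hasDerivAt_id t).add_const 1)
  have hne : (t + 1) ^ a ≠ 0 := (Real.rpow_pos_of_pos ht1 a).ne'
  have : HasDerivAt (fun s : ℝ => (s ^ a + 1) / (s + 1) ^ a) _ t := h1.div h2 hne
  convert this using 1
  have e1 : (t + 1) ^ (a - 1) = (t + 1) ^ a / (t + 1) := by
    rw [Real.rpow_sub ht1, Real.rpow_one]
  have e2 : t ^ (a - 1) = t ^ a / t := by
    rw [Real.rpow_sub ht, Real.rpow_one]
  rw [e1, e2]
  field_simp
  ring

lemma aux_cont (a : ℝ) :
    ContinuousOn (fun s : ℝ => (s ^ a + 1) / (s + 1) ^ a) (Ici 1) := fun t ht =>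
  ((aux_deriv a t (lt_of_lt_of_le one_pos ht)).continuousAt).continuousWithinAt

lemma aux_mono (σ : ℝ) (hσ1 : σ < 1) :
    StrictMonoOn (fun t : ℝ => (t ^ (σ - 1) + 1) / (t + 1) ^ (σ - 1)) (Ici 1) := by
  apply strictMonoOn_of_deriv_pos (convex_Ici 1) (aux_cont (σ - 1))
  intro x hx
  rw [interior_Ici, mem_Ioi] at hx
  have hx0 : (0:ℝ) < x := by linarith
  rw [(aux_deriv (σ - 1) x hx0).deriv]
  apply div_pos
  · have h1 : x ^ (σ - 1 - 1) < 1 :=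
      Real.rpow_lt_one_of_one_lt_of_neg hx (by linarith)
    have h2 : (0:ℝ) < (x + 1) ^ (σ - 1 - 1) :=
      Real.rpow_pos_of_pos (by linarith) _
    have h3 : (0:ℝ) < (1 - σ) * ((x + 1) ^ (σ - 1 - 1) * (1 - x ^ (σ - 1 - 1))) :=
      mul_pos (by linarith) (mul_pos h2 (by linarith))
    calc (0:ℝ) < (1 - σ) * ((x + 1) ^ (σ - 1 - 1) * (1 - x ^ (σ - 1 - 1))) := h3
      _ = (σ - 1) * (x + 1) ^ (σ - 1 - 1) * (x ^ (σ - 1 - 1) - 1) := by ring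
  · positivity

lemma aux_anti (σ : ℝ) (hσ0 : 0 < σ) (hσ1 : σ < 1) :
    StrictAntiOn (fun t : ℝ => (t ^ σ + 1) / (t + 1) ^ σ) (Ici 1) := by
  apply strictAntiOn_of_deriv_neg (convex_Ici 1) (aux_cont σ)
  intro x hx
  rw [interior_Ici, mem_Ioi] at hx
  have hx0 : (0:ℝ) < x := by linarith
  rw [(aux_deriv σ x hx0).deriv]
  apply div_neg_of_neg_of_pos
  · have h1 : x ^ (σ - 1) < 1 :=
      Real.rpow_lt_one_of_one_lt_of_neg hx (by linarith)
    have h2 : (0:ℝ) < (x + 1) ^ (σ - 1) :=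
      Real.rpow_pos_of_pos (by linarith) _
    have h3 : (0:ℝ) < σ * ((x + 1) ^ (σ - 1) * (1 - x ^ (σ - 1))) :=
      mul_pos hσ0 (mul_pos h2 (by linarith))
    calc σ * (x + 1) ^ (σ - 1) * (x ^ (σ - 1) - 1)
        = -(σ * ((x + 1) ^ (σ - 1) * (1 - x ^ (σ - 1)))) := by ring
      _ < 0 := by linarith
  · positivity

/-- Lemma B.1(i): existence, uniqueness and strict lower bound for the
solutions t^f(ε) and t^g(ε) of the two defining equations on [1,∞). -/
theorem stmt_13 (σ : ℝ) (hσ0 : 0 ≤ σ) (hσ1 : σ < 1) :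
    (∀ ε : ℝ, 0 < ε →
      (∃! t : ℝ, 1 ≤ t ∧
        (t ^ (σ - 1) + 1) / (t + 1) ^ (σ - 1) = (2 : ℝ) ^ (2 - σ) * (1 + ε)) ∧
      ∀ t : ℝ, 1 ≤ t →
        (t ^ (σ - 1) + 1) / (t + 1) ^ (σ - 1) = (2 : ℝ) ^ (2 - σ) * (1 + ε) → 1 < t) ∧
    (0 < σ → ∀ ε : ℝ, 0 < ε → ε < 1 - (2 : ℝ) ^ (σ - 1) →
      (∃! t : ℝ, 1 ≤ t ∧
        (t ^ σ + 1) / (t + 1) ^ σ = (2 : ℝ) ^ (1 - σ) * (1 - ε)) ∧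
      ∀ t : ℝ, 1 ≤ t →
        (t ^ σ + 1) / (t + 1) ^ σ = (2 : ℝ) ^ (1 - σ) * (1 - ε) → 1 < t) := by
  constructor
  · -- part (i)
    intro ε hε
    set f : ℝ → ℝ := fun t => (t ^ (σ - 1) + 1) / (t + 1) ^ (σ - 1) with hf
    set c : ℝ := (2 : ℝ) ^ (2 - σ) * (1 + ε) with hc
    have h2pos : (0:ℝ) < (2:ℝ) ^ (2 - σ) := Real.rpow_pos_of_pos two_pos _
    have hf1 : f 1 = (2 : ℝ) ^ (2 - σ) := by
      have e : (2:ℝ) ^ (2 - σ) * (2:ℝ) ^ (σ - 1) = 2 := by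
        rw [← Real.rpow_add two_pos, show (2 - σ) + (σ - 1) = 1 by ring, Real.rpow_one]
      have hp : (0:ℝ) < (2:ℝ) ^ (σ - 1) := Real.rpow_pos_of_pos two_pos _
      simp only [hf, Real.one_rpow]
      norm_num
      rw [div_eq_iff hp.ne']
      linarith [e]
    have hf1c : f 1 < c := by
      rw [hf1, hc]; nlinarith
    -- find T with f T ≥ c
    have hinfty : Tendsto (fun t : ℝ => (t + 1) ^ (1 - σ)) atTop atTop :=
      (tendsto_rpow_atTop (by linarith)).comp
        (tendsto_atTop_add_const_right atTop 1 tendsto_id)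
    obtain ⟨T, hT⟩ := ((hinfty.eventually_ge_atTop c).and (eventually_ge_atTop 1)).exists
    obtain ⟨hTc, hT1⟩ := hT
    have hT0 : (0:ℝ) < T + 1 := by linarith
    have hfT : c ≤ f T := by
      have hinv : (T + 1) ^ (σ - 1) = ((T + 1) ^ (1 - σ))⁻¹ := by
        rw [show σ - 1 = -(1 - σ) by ring, Real.rpow_neg hT0.le]
      have hTpow : (0:ℝ) < T ^ (σ - 1) := Real.rpow_pos_of_pos (by linarith) _
      have hTpow2 : (0:ℝ) < (T + 1) ^ (1 - σ) := Real.rpow_pos_of_pos hT0 _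
      have : f T = (T ^ (σ - 1) + 1) * (T + 1) ^ (1 - σ) := by
        simp only [hf, hinv, div_inv_eq_mul]
      rw [this]
      nlinarith
    -- IVT
    have hsub := intermediate_value_Icc hT1 ((aux_cont (σ - 1)).mono (Icc_subset_Ici_self))
    have hcmem : c ∈ Icc (f 1) (f T) := ⟨hf1c.le, hfT⟩
    obtain ⟨t₀, ht₀, hft₀⟩ := hsub hcmem
    have hmono := aux_mono σ hσ1
    have hbound : ∀ t : ℝ, 1 ≤ t → f t = c → 1 < t := by
      intro t ht hfc
      rcases lt_or_eq_of_le ht with h | h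
      · exact h
      · exfalso; rw [← h] at hfc; rw [hfc] at hf1c; exact lt_irrefl _ hf1c
    refine ⟨⟨t₀, ⟨ht₀.1, hft₀⟩, ?_⟩, hbound⟩
    rintro s ⟨hs1, hsc⟩
    exact hmono.injOn hs1 ht₀.1 (hsc.trans hft₀.symm)
  · -- part (ii)
    intro hσp ε hε hε2
    set g : ℝ → ℝ := fun t => (t ^ σ + 1) / (t + 1) ^ σ with hg
    set c : ℝ := (2 : ℝ) ^ (1 - σ) * (1 - ε) with hc
    have h2pos : (0:ℝ) < (2:ℝ) ^ (1 - σ) := Real.rpow_pos_of_pos two_pos _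
    have h2pos' : (0:ℝ) < (2:ℝ) ^ (σ - 1) := Real.rpow_pos_of_pos two_pos _
    have hmul : (2:ℝ) ^ (1 - σ) * (2:ℝ) ^ (σ - 1) = 1 := by
      rw [← Real.rpow_add two_pos, show (1 - σ) + (σ - 1) = 0 by ring, Real.rpow_zero]
    have hg1 : g 1 = (2 : ℝ) ^ (1 - σ) := by
      have hp : (0:ℝ) < (2:ℝ) ^ σ := Real.rpow_pos_of_pos two_pos _
      have e : (2:ℝ) ^ (1 - σ) * (2:ℝ) ^ σ = 2 := by
        rw [← Real.rpow_add two_pos, show (1 - σ) + σ = 1 by ring, Real.rpow_one]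
      simp only [hg, Real.one_rpow]
      norm_num
      rw [div_eq_iff hp.ne']
      linarith [e]
    have hc1 : 1 < c := by
      have : (2:ℝ) ^ (σ - 1) < 1 - ε := by linarith
      calc (1:ℝ) = (2:ℝ) ^ (1 - σ) * (2:ℝ) ^ (σ - 1) := hmul.symm
        _ < c := by rw [hc]; exact (mul_lt_mul_iff_right₀ h2pos).mpr this
    have hg1c : c < g 1 := by
      rw [hg1, hc]; nlinarith
    -- find T with g T ≤ c
    have hinfty : Tendsto (fun t : ℝ => (t + 1) ^ σ) atTop atTop :=
      (tendsto_rpow_atTop hσp).comp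
        (tendsto_atTop_add_const_right atTop 1 tendsto_id)
    obtain ⟨T, hT⟩ := ((hinfty.eventually_ge_atTop (1 / (c - 1))).and (eventually_ge_atTop 1)).exists
    obtain ⟨hTc, hT1⟩ := hT
    have hT0 : (0:ℝ) < T + 1 := by linarith
    have hTp : (0:ℝ) < (T + 1) ^ σ := Real.rpow_pos_of_pos hT0 _
    have hgT : g T ≤ c := by
      have hle : T ^ σ ≤ (T + 1) ^ σ :=
        Real.rpow_le_rpow (by linarith) (by linarith) hσ0
      have key : 1 / (c - 1) ≤ (T + 1) ^ σ := hTc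
      have : 1 ≤ (c - 1) * (T + 1) ^ σ := by
        rw [div_le_iff₀ (by linarith : (0:ℝ) < c - 1)] at key
        linarith [key]
      simp only [hg]
      rw [div_le_iff₀ hTp]
      nlinarith
    -- IVT (decreasing)
    have hsub := intermediate_value_Icc' hT1 ((aux_cont σ).mono (Icc_subset_Ici_self))
    have hcmem : c ∈ Icc (g T) (g 1) := ⟨hgT, hg1c.le⟩
    obtain ⟨t₀, ht₀, hgt₀⟩ := hsub hcmem
    have hanti := aux_anti σ hσp hσ1
    have hbound : ∀ t : ℝ, 1 ≤ t → g t = c → 1 < t := by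
      intro t ht hgc
      rcases lt_or_eq_of_le ht with h | h
      · exact h
      · exfalso; rw [← h] at hgc; rw [hgc] at hg1c; exact lt_irrefl _ hg1c
    refine ⟨⟨t₀, ⟨ht₀.1, hgt₀⟩, ?_⟩, hbound⟩
    rintro s ⟨hs1, hsc⟩
    exact hanti.injOn hs1 ht₀.1 (hsc.trans hgt₀.symm)
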